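/- Let Y be a closed subset of a metrizable space X. Then (X, Y) is a teardrop if and only if there exists a metric d inducing the topology of X and a retraction r : X → Y such that whenever {xₙ} is a sequence in X with no convergent subsequence and d(xₙ, Y) → 0, the sequence {r(xₙ)} also has no convergent subsequence. -/

import Mathlib

open Topology Set Filter

/-- The teardrop topology on `X` associated to a pair `(X, Y)` and a collapse
map `f : X → ↥Y × (-∞, +∞]` (modelled with `EReal`). -/
def pairTeardropTop {X : Type*} [TopologicalSpace X] (Y : Set X)
    (f : X → ↥Y × EReal) : TopologicalSpace X :=
  TopologicalSpace.generateFrom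
    ({S | ∃ W : Set X, IsOpen W ∧ S = W ∩ Yᶜ} ∪
     {S | ∃ V : Set (↥Y × EReal), IsOpen V ∧ S = f ⁻¹' V})

/-- `(X, Y)` is a teardrop. -/
def IsTeardropPair {X : Type*} [tX : TopologicalSpace X] (Y : Set X) : Prop :=
  ∃ f : X → ↥Y × EReal, Continuous f ∧
    (∀ y : ↥Y, f y = (y, ⊤)) ∧
    (∀ x, x ∉ Y → ∃ r : ℝ, (f x).2 = (r : EReal)) ∧
    pairTeardropTop Y f = tX

/-- A sequence has no convergent subsequence ("`xₙ → ∞`"). -/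
def NoConvSubseq {X : Type*} [TopologicalSpace X] (u : ℕ → X) : Prop :=
  ¬ ∃ (φ : ℕ → ℕ) (x : X), StrictMono φ ∧ Tendsto (u ∘ φ) atTop (𝓝 x)

private lemma aux_choose_near {α : Type*} [PseudoMetricSpace α] {Y : Set α} (hYne : Y.Nonempty)
    (u : ℕ → α) (hd : Tendsto (fun n => Metric.infDist (u n) Y) atTop (𝓝 0)) :
    ∃ v : ℕ → α, (∀ n, v n ∈ Y) ∧ Tendsto (fun n => dist (u n) (v n)) atTop (𝓝 0) := by
  have h : ∀ n : ℕ, ∃ y ∈ Y, dist (u n) y < Metric.infDist (u n) Y + 1 / (n + 1) := by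
    intro n
    refine (Metric.infDist_lt_iff hYne).1 (lt_add_of_pos_right _ (by positivity))
  choose v hv1 hv2 using h
  refine ⟨v, hv1, squeeze_zero (fun n => dist_nonneg) (fun n => (hv2 n).le) ?_⟩
  have := hd.add tendsto_one_div_add_atTop_nhds_zero_nat
  simpa using this

private lemma aux_tendsto_of_dist {α : Type*} [PseudoMetricSpace α] {g : ℕ → α} {a : α}
    (h : Tendsto (fun n => dist (g n) a) atTop (𝓝 0)) : Tendsto g atTop (𝓝 a) :=
  tendsto_iff_dist_tendsto_zero.2 h

private lemma teardrop_forward {X : Type*} [tX : TopologicalSpace X]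
    [TopologicalSpace.MetrizableSpace X] (Y : Set X) (hY : IsClosed Y)
    (h : IsTeardropPair Y) :
    ∃ m : MetricSpace X, m.toUniformSpace.toTopologicalSpace = tX ∧
      ∃ r : X → X, Continuous r ∧ (∀ x, r x ∈ Y) ∧ (∀ y ∈ Y, r y = y) ∧
        ∀ u : ℕ → X, NoConvSubseq u →
          Tendsto (fun n => @Metric.infDist X m.toPseudoMetricSpace (u n) Y)
            atTop (𝓝 0) →
          NoConvSubseq (r ∘ u) := by
  classical
  obtain ⟨f, hf_cont, hfY, hf_real, htop⟩ := h
  have hemb : Topology.IsEmbedding (fun x : X => (x, (f x).2)) :=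
    isEmbedding_graph (continuous_snd.comp hf_cont)
  letI mX : MetricSpace X := TopologicalSpace.metrizableSpaceMetric X
  letI mE : MetricSpace EReal := TopologicalSpace.metrizableSpaceMetric EReal
  letI mP : MetricSpace (X × EReal) := Prod.metricSpaceMax
  set m : MetricSpace X :=
    @Topology.IsEmbedding.comapMetricSpace X (X × EReal) tX mP _ hemb with hm
  -- the retraction
  set r : X → X := fun x => ((f x).1 : X) with hr_def
  have hr_cont : Continuous r := continuous_subtype_val.comp (continuous_fst.comp hf_cont)
  have hr_mem : ∀ x, r x ∈ Y := fun x => (f x).1.2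
  have hr_id : ∀ y ∈ Y, r y = y := by
    intro y hy
    have := hfY ⟨y, hy⟩
    simp only [hr_def, this]
  refine ⟨m, rfl, r, hr_cont, hr_mem, hr_id, ?_⟩
  intro u hu hdist
  have hYne : Y.Nonempty := ⟨r (u 0), hr_mem (u 0)⟩
  -- second coordinates tend to ⊤
  obtain ⟨v, hv1, hv2⟩ := @aux_choose_near X m.toPseudoMetricSpace Y hYne u hdist
  have hvtop : ∀ n, (f (v n)).2 = (⊤ : EReal) := by
    intro n
    have := hfY ⟨v n, hv1 n⟩
    simpa using congrArg Prod.snd this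
  have hdE : ∀ n, @dist EReal mE.toPseudoMetricSpace.toDist (f (u n)).2 (⊤ : EReal)
      ≤ @dist X m.toPseudoMetricSpace.toDist (u n) (v n) := by
    intro n
    have h1 : @dist X m.toPseudoMetricSpace.toDist (u n) (v n)
        = @dist (X × EReal) mP.toPseudoMetricSpace.toDist
            (u n, (f (u n)).2) (v n, (f (v n)).2) := rfl
    have h2 : @dist (X × EReal) mP.toPseudoMetricSpace.toDist
            (u n, (f (u n)).2) (v n, (f (v n)).2)
        = max (@dist X mX.toPseudoMetricSpace.toDist (u n) (v n))
            (@dist EReal mE.toPseudoMetricSpace.toDist (f (u n)).2 (f (v n)).2) :=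
      @Prod.dist_eq X EReal mX.toPseudoMetricSpace mE.toPseudoMetricSpace
        (u n, (f (u n)).2) (v n, (f (v n)).2)
    rw [h1, h2, hvtop n]
    exact le_max_right _ _
  have hE0 : Tendsto
      (fun n => @dist EReal mE.toPseudoMetricSpace.toDist (f (u n)).2 (⊤ : EReal))
      atTop (𝓝 0) :=
    squeeze_zero (fun n => @dist_nonneg EReal mE.toPseudoMetricSpace _ _) hdE hv2
  have h2 : Tendsto (fun n => (f (u n)).2) atTop (𝓝 (⊤ : EReal)) :=
    @aux_tendsto_of_dist EReal mE.toPseudoMetricSpace _ _ hE0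
  -- now suppose `r ∘ u` had a convergent subsequence
  rintro ⟨φ, x, hφ, hconv⟩
  have hxY : x ∈ Y :=
    hY.mem_of_tendsto hconv (Eventually.of_forall fun n => hr_mem (u (φ n)))
  have hx1 : Tendsto (fun n => (f (u (φ n))).1) atTop (𝓝 (⟨x, hxY⟩ : Y)) :=
    tendsto_subtype_rng.2 hconv
  have h2' : Tendsto (fun n => (f (u (φ n))).2) atTop (𝓝 (⊤ : EReal)) :=
    h2.comp hφ.tendsto_atTop
  have hF : Tendsto (fun n => f (u (φ n))) atTop (𝓝 ((⟨x, hxY⟩ : Y), (⊤ : EReal))) := by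
    have := hx1.prodMk_nhds h2'
    simpa using this
  have hT : Tendsto (u ∘ φ) atTop (@nhds X (pairTeardropTop Y f) x) := by
    rw [pairTeardropTop, TopologicalSpace.nhds_generateFrom]
    refine tendsto_iInf.2 fun s => tendsto_iInf.2 fun hs => tendsto_principal.2 ?_
    obtain ⟨hxs, hsg⟩ := hs
    rcases hsg with ⟨W, hW, rfl⟩ | ⟨V, hV, rfl⟩
    · exact absurd hxs.2 (by simpa using hxY)
    · have hfx : ((⟨x, hxY⟩ : Y), (⊤ : EReal)) ∈ V := by
        have : f x ∈ V := hxs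
        rwa [hfY ⟨x, hxY⟩] at this
      exact hF (hV.mem_nhds hfx)
  rw [htop] at hT
  exact hu ⟨φ, x, hφ, hT⟩

private lemma teardrop_backward {X : Type*} [m : MetricSpace X] (Y : Set X) (hY : IsClosed Y)
    (r : X → X) (hr_cont : Continuous r) (hr_mem : ∀ x, r x ∈ Y) (hr_id : ∀ y ∈ Y, r y = y)
    (hseq : ∀ u : ℕ → X, NoConvSubseq u →
      Tendsto (fun n => Metric.infDist (u n) Y) atTop (𝓝 0) → NoConvSubseq (r ∘ u)) :
    IsTeardropPair Y := by
  classical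
  rcases Y.eq_empty_or_nonempty with hYe | hYne
  · -- `Y = ∅` forces `X = ∅`
    have hXe : IsEmpty X := ⟨fun x => by simpa [hYe] using hr_mem x⟩
    have hall : ∀ (t : TopologicalSpace X) (s : Set X), IsOpen[t] s := by
      intro t s
      rw [Set.eq_empty_of_isEmpty s]
      simpa using t.isOpen_sUnion ∅ (by simp)
    refine ⟨fun x => isEmptyElim x, ?_, fun y => isEmptyElim (y : X),
      fun x _ => isEmptyElim x, ?_⟩
    · exact continuous_def.2 fun s _ => hall _ _
    · exact TopologicalSpace.ext
        (funext fun s => propext ⟨fun _ => hall _ s, fun _ => hall _ s⟩)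
  -- main case
  set F2 : X → EReal := fun x => if x ∈ Y then (⊤ : EReal)
    else ((Metric.infDist x Y)⁻¹ : ℝ) with hF2def
  have hF2top : ∀ x ∈ Y, F2 x = ⊤ := fun x hx => if_pos hx
  have hF2 : Continuous F2 := by
    rw [continuous_iff_continuousAt]
    intro x
    by_cases hx : x ∈ Y
    · rw [ContinuousAt, hF2top x hx, EReal.tendsto_nhds_top_iff_real]
      intro M
      have hKpos : (0 : ℝ) < (|M| + 1)⁻¹ := by positivity
      have h0 : Metric.infDist x Y = 0 := Metric.infDist_zero_of_mem hx
      have hev : ∀ᶠ z in 𝓝 x, Metric.infDist z Y < (|M| + 1)⁻¹ := by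
        have := (Metric.continuous_infDist_pt Y).continuousAt (x := x)
        rw [ContinuousAt, h0] at this
        exact this.eventually_lt_const hKpos
      filter_upwards [hev] with z hz
      by_cases hzY : z ∈ Y
      · rw [hF2top z hzY]; exact EReal.coe_lt_top M
      · have hpos : 0 < Metric.infDist z Y :=
          (hY.notMem_iff_infDist_pos hYne).1 hzY
        have h1 : (|M| + 1 : ℝ) < (Metric.infDist z Y)⁻¹ := by
          have := inv_strictAnti₀ hpos hz
          rwa [inv_inv] at this
        have h2 : M < (Metric.infDist z Y)⁻¹ :=
          lt_of_le_of_lt (le_abs_self M) (lt_trans (by linarith) h1)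
        rw [hF2def]
        simp only [if_neg hzY]
        exact_mod_cast EReal.coe_lt_coe_iff.2 h2
    · have hevc : ∀ᶠ z in 𝓝 x, z ∈ Yᶜ := hY.isOpen_compl.mem_nhds hx
      have hpos : Metric.infDist x Y ≠ 0 :=
        ne_of_gt ((hY.notMem_iff_infDist_pos hYne).1 hx)
      have hca : ContinuousAt (fun z => (((Metric.infDist z Y)⁻¹ : ℝ) : EReal)) x :=
        continuous_coe_real_ereal.continuousAt.comp
          (((Metric.continuous_infDist_pt Y).continuousAt).inv₀ hpos)
      refine hca.congr ?_
      filter_upwards [hevc] with z hz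
      rw [hF2def]; simp only [if_neg hz]
  set f : X → ↥Y × EReal := fun x => ((⟨r x, hr_mem x⟩ : Y), F2 x) with hfdef
  have hf_cont : Continuous f := (hr_cont.subtype_mk hr_mem).prodMk hF2
  have hfY : ∀ y : ↥Y, f y = (y, ⊤) := by
    intro y
    simp only [hfdef, Prod.mk.injEq]
    exact ⟨Subtype.ext (hr_id y y.2), hF2top y y.2⟩
  refine ⟨f, hf_cont, hfY, fun x hx => ⟨(Metric.infDist x Y)⁻¹, if_neg hx⟩, ?_⟩
  -- topology equality
  refine le_antisymm ?_ (le_generateFrom ?_)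
  · -- every open set of the metric topology is teardrop-open
    rw [TopologicalSpace.le_def]
    intro U hU
    -- the key quantitative estimate near points of `Y ∩ U`
    have key : ∀ y, y ∈ U → y ∈ Y → ∃ ε M : ℝ, 0 < ε ∧
        ∀ x, dist (r x) y < ε → (M : EReal) < F2 x → x ∈ U := by
      intro y hyU hyY
      by_contra hcon
      push_neg at hcon
      choose x hx1 hx2 hx3 using
        fun n : ℕ => hcon (1 / (n + 1)) ((n : ℝ) + 1) (by positivity)
      have hxd : ∀ n : ℕ, Metric.infDist (x n) Y ≤ 1 / ((n : ℝ) + 1) := by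
        intro n
        by_cases hxY : x n ∈ Y
        · rw [Metric.infDist_zero_of_mem hxY]; positivity
        · have hF2x : F2 (x n) = ((Metric.infDist (x n) Y)⁻¹ : ℝ) := if_neg hxY
          have h1 : ((n : ℝ) + 1) < (Metric.infDist (x n) Y)⁻¹ := by
            have := hx2 n
            rw [hF2x] at this
            exact_mod_cast EReal.coe_lt_coe_iff.1 this
          have hdpos : 0 < Metric.infDist (x n) Y := by
            rcases lt_or_eq_of_le (Metric.infDist_nonneg : (0:ℝ) ≤ Metric.infDist (x n) Y) with h | h
            · exact h
            · exfalso; rw [← h] at h1; simp at h1; linarith [h1]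
          have := inv_strictAnti₀ (by positivity : (0:ℝ) < (n : ℝ) + 1) h1
          rw [inv_inv] at this
          rw [one_div]
          exact this.le
      have hdist0 : Tendsto (fun n => Metric.infDist (x n) Y) atTop (𝓝 0) :=
        squeeze_zero (fun n => Metric.infDist_nonneg) hxd
          tendsto_one_div_add_atTop_nhds_zero_nat
      have hrx : Tendsto (fun n => r (x n)) atTop (𝓝 y) := by
        refine tendsto_iff_dist_tendsto_zero.2 ?_
        exact squeeze_zero (fun n => dist_nonneg) (fun n => (hx1 n).le)
          tendsto_one_div_add_atTop_nhds_zero_nat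
      by_cases hns : NoConvSubseq x
      · exact hseq x hns hdist0 ⟨id, y, strictMono_id, by exact hrx⟩
      · obtain ⟨φ, z, hφ, hz⟩ := not_not.mp hns
        have hzY : z ∈ Y := by
          have h1 : Tendsto (fun n => Metric.infDist ((x ∘ φ) n) Y) atTop
              (𝓝 (Metric.infDist z Y)) :=
            ((Metric.continuous_infDist_pt Y).tendsto z).comp hz
          have h2 : Tendsto (fun n => Metric.infDist ((x ∘ φ) n) Y) atTop (𝓝 0) :=
            hdist0.comp hφ.tendsto_atTop
          exact (hY.mem_iff_infDist_zero hYne).2 (tendsto_nhds_unique h1 h2)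
        have hrz : Tendsto (fun n => r ((x ∘ φ) n)) atTop (𝓝 (r z)) :=
          ((hr_cont.tendsto z).comp hz)
        have hry : Tendsto (fun n => r ((x ∘ φ) n)) atTop (𝓝 y) :=
          hrx.comp hφ.tendsto_atTop
        have hzy : z = y := by rw [← hr_id z hzY]; exact tendsto_nhds_unique hrz hry
        have : ∀ᶠ n in atTop, (x ∘ φ) n ∈ U := by
          rw [hzy] at hz
          exact hz (hU.mem_nhds hyU)
        obtain ⟨n, hn⟩ := this.exists
        exact hx3 (φ n) hn
    -- build `U` as a union of basic teardrop-open sets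
    set gens : Set (Set X) :=
      {S | ∃ W : Set X, IsOpen W ∧ S = W ∩ Yᶜ} ∪
      {S | ∃ V : Set (↥Y × EReal), IsOpen V ∧ S = f ⁻¹' V} with hgens
    show IsOpen[TopologicalSpace.generateFrom gens] U
    have hUeq : U = ⋃₀ {s | s ∈ gens ∧ s ⊆ U} := by
      refine subset_antisymm ?_ (sUnion_subset fun s hs => hs.2)
      intro p hp
      by_cases hpY : p ∈ Y
      · obtain ⟨ε, M, hε, himp⟩ := key p hp hpY
        set V : Set (↥Y × EReal) :=
          {q | dist (q.1 : X) p < ε ∧ (M : EReal) < q.2} with hVdef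
        have hVopen : IsOpen V := by
          refine IsOpen.inter ?_ ?_
          · exact isOpen_Iio.preimage
              ((continuous_subtype_val.comp continuous_fst).dist continuous_const)
          · exact isOpen_Ioi.preimage continuous_snd
        refine ⟨f ⁻¹' V, ⟨Or.inr ⟨V, hVopen, rfl⟩, ?_⟩, ?_⟩
        · intro z hz
          obtain ⟨hz1, hz2⟩ := hz
          exact himp z hz1 hz2
        · refine ⟨?_, ?_⟩
          · show dist ((f p).1 : X) p < ε
            have : ((f p).1 : X) = r p := rfl
            rw [this, hr_id p hpY, dist_self]
            exact hε
          · show (M : EReal) < (f p).2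
            have : (f p).2 = F2 p := rfl
            rw [this, hF2top p hpY]
            exact EReal.coe_lt_top M
      · exact ⟨U ∩ Yᶜ, ⟨Or.inl ⟨U, hU, rfl⟩, inter_subset_left⟩, ⟨hp, hpY⟩⟩
    rw [hUeq]
    exact TopologicalSpace.GenerateOpen.sUnion _
      (fun s hs => TopologicalSpace.GenerateOpen.basic s hs.1)
  · -- every generator is open in the metric topology
    rintro s (⟨W, hW, rfl⟩ | ⟨V, hV, rfl⟩)
    · exact hW.inter hY.isOpen_compl
    · exact hV.preimage hf_cont

/-- Theorem 3.10: for `Y` a closed subset of a metrizable space `X`, the pair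
`(X, Y)` is a teardrop iff there are a compatible metric `d` on `X` and a
retraction `r : X → Y` such that whenever `xₙ → ∞` and `d(xₙ, Y) → 0`,
also `r(xₙ) → ∞`. -/
theorem isTeardropPair_iff_metric_retraction
    {X : Type*} [tX : TopologicalSpace X] [TopologicalSpace.MetrizableSpace X]
    (Y : Set X) (hY : IsClosed Y) :
    IsTeardropPair Y ↔
      ∃ m : MetricSpace X, m.toUniformSpace.toTopologicalSpace = tX ∧
        ∃ r : X → X, Continuous r ∧ (∀ x, r x ∈ Y) ∧ (∀ y ∈ Y, r y = y) ∧
          ∀ u : ℕ → X, NoConvSubseq u →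
            Tendsto (fun n => @Metric.infDist X m.toPseudoMetricSpace (u n) Y)
              atTop (𝓝 0) →
            NoConvSubseq (r ∘ u) := by
  constructor
  · exact fun h => teardrop_forward Y hY h
  · rintro ⟨m, hm, r, h1, h2, h3, h4⟩
    subst hm
    exact @teardrop_backward X m Y hY r h1 h2 h3 h4
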